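/- For any compact connected metric graph G with nonempty Dirichlet vertex set, the product of the ground-state energy λ₁(G) and the torsional rigidity T(G) is strictly less than the total length |G|. -/

import Mathlib

open MeasureTheory Finset

/-- The set of Pólya quotients; its supremum is the torsional rigidity `T(G)`. -/
def polyaSet (V E : Type) [Fintype E] (s t : E → V) (ℓ : E → ℝ) (VD : Finset V) :
    Set ℝ :=
  { r | ∃ (u u' : E → ℝ → ℝ) (g : V → ℝ),
      (∀ e, ∀ x ∈ Set.Icc (0:ℝ) (ℓ e), HasDerivAt (u e) (u' e x) x) ∧
      (∀ e, ContinuousOn (u' e) (Set.Icc (0:ℝ) (ℓ e))) ∧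
      (∀ e, u e 0 = g (s e)) ∧ (∀ e, u e (ℓ e) = g (t e)) ∧
      (∀ w ∈ VD, g w = 0) ∧
      0 < (∑ e, ∫ x in (0:ℝ)..(ℓ e), (u' e x) ^ 2) ∧
      r = (∑ e, ∫ x in (0:ℝ)..(ℓ e), u e x) ^ 2 /
            (∑ e, ∫ x in (0:ℝ)..(ℓ e), (u' e x) ^ 2) }

/-- The set of Rayleigh quotients `∫_G (u')² / ∫_G u²` over admissible nonzero test
functions `u ∈ H¹₀(G; V_D)`; its infimum is the ground-state energy `λ₁(G)`. -/
def rayleighSet (V E : Type) [Fintype E] (s t : E → V) (ℓ : E → ℝ) (VD : Finset V) :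
    Set ℝ :=
  { r | ∃ (u u' : E → ℝ → ℝ) (g : V → ℝ),
      (∀ e, ∀ x ∈ Set.Icc (0:ℝ) (ℓ e), HasDerivAt (u e) (u' e x) x) ∧
      (∀ e, ContinuousOn (u' e) (Set.Icc (0:ℝ) (ℓ e))) ∧
      (∀ e, u e 0 = g (s e)) ∧ (∀ e, u e (ℓ e) = g (t e)) ∧
      (∀ w ∈ VD, g w = 0) ∧
      0 < (∑ e, ∫ x in (0:ℝ)..(ℓ e), (u e x) ^ 2) ∧
      r = (∑ e, ∫ x in (0:ℝ)..(ℓ e), (u' e x) ^ 2) /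
            (∑ e, ∫ x in (0:ℝ)..(ℓ e), (u e x) ^ 2) }

/-- Cauchy–Schwarz for interval integrals of continuous functions. -/
theorem my_interval_CS {f : ℝ → ℝ} {a b : ℝ} (hab : a ≤ b)
    (hf : ContinuousOn f (Set.Icc a b)) :
    (∫ x in a..b, f x) ^ 2 ≤ (b - a) * ∫ x in a..b, (f x) ^ 2 := by
  have huIcc : Set.uIcc a b = Set.Icc a b := Set.uIcc_of_le hab
  have hfi : IntervalIntegrable f volume a b :=
    (huIcc ▸ hf).intervalIntegrable
  have hf2 : ContinuousOn (fun x => (f x) ^ 2) (Set.Icc a b) := hf.pow 2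
  have hfi2 : IntervalIntegrable (fun x => (f x) ^ 2) volume a b :=
    (huIcc ▸ hf2).intervalIntegrable
  rcases eq_or_lt_of_le hab with rfl | hlt
  · simp
  set I := ∫ x in a..b, f x with hI
  set J := ∫ x in a..b, (f x) ^ 2 with hJ
  have key : (0:ℝ) ≤ ∫ x in a..b, ((b - a) * f x - I) ^ 2 := by
    apply intervalIntegral.integral_nonneg hab
    intro x _; positivity
  have expand : (∫ x in a..b, ((b - a) * f x - I) ^ 2)
      = (b - a) ^ 2 * J - 2 * (b - a) * I * I + (b - a) * I ^ 2 := by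
    have : ∀ x, ((b - a) * f x - I) ^ 2
        = (b - a) ^ 2 * (f x) ^ 2 - (2 * (b - a) * I) * f x + I ^ 2 := by
      intro x; ring
    simp_rw [this]
    rw [intervalIntegral.integral_add (((hfi2.const_mul _).sub (hfi.const_mul _))) intervalIntegrable_const,
      intervalIntegral.integral_sub (hfi2.const_mul _) (hfi.const_mul _),
      intervalIntegral.integral_const_mul, intervalIntegral.integral_const_mul,
      intervalIntegral.integral_const]
    simp only [smul_eq_mul]
    try ring
  rw [expand] at key
  nlinarith [hlt, sq_nonneg (b - a)]
/-- Key estimate, case where the function vanishes at the left endpoint. -/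
theorem my_key_left {u u' : ℝ → ℝ} {l δ : ℝ} (hl : 0 < l) (hδ : 0 < δ) (hδl : δ ≤ l)
    (hderiv : ∀ x ∈ Set.Icc (0:ℝ) l, HasDerivAt u (u' x) x)
    (hcont : ContinuousOn u' (Set.Icc 0 l)) (hzero : u 0 = 0) :
    |∫ x in (0:ℝ)..l, u x| ≤
      Real.sqrt (l - δ) * Real.sqrt (∫ x in (0:ℝ)..l, (u x) ^ 2)
      + δ * Real.sqrt δ * Real.sqrt (∫ x in (0:ℝ)..l, (u' x) ^ 2) := by
  have hucont : ContinuousOn u (Set.Icc 0 l) := fun x hx =>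
    (hderiv x hx).continuousAt.continuousWithinAt
  have huIcc : Set.uIcc (0:ℝ) l = Set.Icc 0 l := Set.uIcc_of_le hl.le
  have hui : IntervalIntegrable u volume 0 l := (huIcc ▸ hucont).intervalIntegrable
  have hu2i : IntervalIntegrable (fun x => (u x)^2) volume 0 l :=
    (huIcc ▸ (hucont.pow 2)).intervalIntegrable
  have hu'2i : IntervalIntegrable (fun x => (u' x)^2) volume 0 l :=
    (huIcc ▸ (hcont.pow 2)).intervalIntegrable
  set D := ∫ x in (0:ℝ)..l, (u' x) ^ 2 with hD
  set M := ∫ x in (0:ℝ)..l, (u x) ^ 2 with hM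
  have hD0 : 0 ≤ D := intervalIntegral.integral_nonneg hl.le (fun x _ => sq_nonneg _)
  have hM0 : 0 ≤ M := intervalIntegral.integral_nonneg hl.le (fun x _ => sq_nonneg _)
  -- pointwise bound on [0, δ]
  have hpt : ∀ y ∈ Set.Icc (0:ℝ) δ, (u y) ^ 2 ≤ δ * D := by
    intro y hy
    have hy0 : (0:ℝ) ≤ y := hy.1
    have hyδ : y ≤ δ := hy.2
    have hyl : y ≤ l := hyδ.trans hδl
    have hsub : Set.Icc (0:ℝ) y ⊆ Set.Icc 0 l := Set.Icc_subset_Icc le_rfl hyl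
    have hftc : ∫ x in (0:ℝ)..y, u' x = u y - u 0 := by
      apply intervalIntegral.integral_eq_sub_of_hasDerivAt
      · intro x hx
        exact hderiv x (hsub ((Set.uIcc_of_le hy0) ▸ hx))
      · exact ((Set.uIcc_of_le hy0) ▸ (hcont.mono hsub)).intervalIntegrable
    have huy : u y = ∫ x in (0:ℝ)..y, u' x := by rw [hftc, hzero, sub_zero]
    have hCS : (∫ x in (0:ℝ)..y, u' x) ^ 2 ≤ y * ∫ x in (0:ℝ)..y, (u' x) ^ 2 := by
      simpa using my_interval_CS hy0 (hcont.mono hsub)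
    have hpart : ∫ x in (0:ℝ)..y, (u' x) ^ 2 ≤ D := by
      have hsplit : (∫ x in (0:ℝ)..y, (u' x) ^ 2) + (∫ x in y..l, (u' x) ^ 2) = D :=
        intervalIntegral.integral_add_adjacent_intervals
          (hu'2i.mono_set (by rw [Set.uIcc_of_le hy0, huIcc]; exact hsub))
          (hu'2i.mono_set (by rw [Set.uIcc_of_le hyl, huIcc]; exact Set.Icc_subset_Icc hy0 le_rfl))
      have : 0 ≤ ∫ x in y..l, (u' x) ^ 2 :=
        intervalIntegral.integral_nonneg hyl (fun x _ => sq_nonneg _)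
      linarith
    have h1 : 0 ≤ ∫ x in (0:ℝ)..y, (u' x) ^ 2 :=
      intervalIntegral.integral_nonneg hy0 (fun x _ => sq_nonneg _)
    calc (u y) ^ 2 = (∫ x in (0:ℝ)..y, u' x) ^ 2 := by rw [huy]
      _ ≤ y * ∫ x in (0:ℝ)..y, (u' x) ^ 2 := hCS
      _ ≤ δ * D := by apply mul_le_mul hyδ hpart h1 hδ.le
  -- bound on ∫_0^δ u
  have hsubδ : Set.Icc (0:ℝ) δ ⊆ Set.Icc 0 l := Set.Icc_subset_Icc le_rfl hδl
  have hu2δ : IntervalIntegrable (fun x => (u x)^2) volume 0 δ :=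
    hu2i.mono_set (by rw [Set.uIcc_of_le hδ.le, huIcc]; exact hsubδ)
  have hintδ2 : (∫ x in (0:ℝ)..δ, (u x) ^ 2) ≤ δ * (δ * D) := by
    calc (∫ x in (0:ℝ)..δ, (u x) ^ 2) ≤ ∫ x in (0:ℝ)..δ, δ * D := by
          apply intervalIntegral.integral_mono_on hδ.le hu2δ intervalIntegrable_const hpt
      _ = δ * (δ * D) := by rw [intervalIntegral.integral_const]; simp
  have habs1 : |∫ x in (0:ℝ)..δ, u x| ≤ δ * Real.sqrt δ * Real.sqrt D := by
    have hCS : (∫ x in (0:ℝ)..δ, u x) ^ 2 ≤ δ * ∫ x in (0:ℝ)..δ, (u x) ^ 2 := by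
      simpa using my_interval_CS hδ.le (hucont.mono hsubδ)
    have h2 : 0 ≤ ∫ x in (0:ℝ)..δ, (u x)^2 :=
      intervalIntegral.integral_nonneg hδ.le (fun x _ => sq_nonneg _)
    calc |∫ x in (0:ℝ)..δ, u x| = Real.sqrt ((∫ x in (0:ℝ)..δ, u x) ^ 2) :=
          (Real.sqrt_sq_eq_abs _).symm
      _ ≤ Real.sqrt ((δ * Real.sqrt δ * Real.sqrt D) ^ 2) := by
          apply Real.sqrt_le_sqrt
          have hrw : (δ * Real.sqrt δ * Real.sqrt D) ^ 2 = δ * (δ * (δ * D)) := by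
            rw [mul_pow, mul_pow, Real.sq_sqrt hδ.le, Real.sq_sqrt hD0]; ring
          rw [hrw]; nlinarith
      _ = δ * Real.sqrt δ * Real.sqrt D := Real.sqrt_sq (by positivity)
  -- bound on ∫_δ^l u
  have hδli : δ ≤ l := hδl
  have hsubr : Set.Icc δ l ⊆ Set.Icc 0 l := Set.Icc_subset_Icc hδ.le le_rfl
  have habs2 : |∫ x in δ..l, u x| ≤ Real.sqrt (l - δ) * Real.sqrt M := by
    have hCS : (∫ x in δ..l, u x) ^ 2 ≤ (l - δ) * ∫ x in δ..l, (u x) ^ 2 :=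
      my_interval_CS hδli (hucont.mono hsubr)
    have hpart : (∫ x in δ..l, (u x) ^ 2) ≤ M := by
      have hsplit : (∫ x in (0:ℝ)..δ, (u x) ^ 2) + (∫ x in δ..l, (u x) ^ 2) = M :=
        intervalIntegral.integral_add_adjacent_intervals hu2δ
          (hu2i.mono_set (by rw [Set.uIcc_of_le hδli, huIcc]; exact hsubr))
      have : 0 ≤ ∫ x in (0:ℝ)..δ, (u x) ^ 2 :=
        intervalIntegral.integral_nonneg hδ.le (fun x _ => sq_nonneg _)
      linarith
    have h2 : 0 ≤ ∫ x in δ..l, (u x)^2 :=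
      intervalIntegral.integral_nonneg hδli (fun x _ => sq_nonneg _)
    calc |∫ x in δ..l, u x| = Real.sqrt ((∫ x in δ..l, u x) ^ 2) :=
          (Real.sqrt_sq_eq_abs _).symm
      _ ≤ Real.sqrt ((Real.sqrt (l - δ) * Real.sqrt M) ^ 2) := by
          apply Real.sqrt_le_sqrt
          have hrw : (Real.sqrt (l - δ) * Real.sqrt M) ^ 2 = (l - δ) * M := by
            rw [mul_pow, Real.sq_sqrt (by linarith), Real.sq_sqrt hM0]
          rw [hrw]
          have hlδ : (0:ℝ) ≤ l - δ := by linarith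
          nlinarith
      _ = Real.sqrt (l - δ) * Real.sqrt M := Real.sqrt_sq (by positivity)
  -- combine
  have hsplit : (∫ x in (0:ℝ)..δ, u x) + (∫ x in δ..l, u x) = ∫ x in (0:ℝ)..l, u x :=
    intervalIntegral.integral_add_adjacent_intervals
      (hui.mono_set (by rw [Set.uIcc_of_le hδ.le, huIcc]; exact hsubδ))
      (hui.mono_set (by rw [Set.uIcc_of_le hδli, huIcc]; exact hsubr))
  rw [← hsplit]
  calc |(∫ x in (0:ℝ)..δ, u x) + (∫ x in δ..l, u x)|
      ≤ |∫ x in (0:ℝ)..δ, u x| + |∫ x in δ..l, u x| := abs_add_le _ _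
    _ ≤ Real.sqrt (l - δ) * Real.sqrt M + δ * Real.sqrt δ * Real.sqrt D := by
        linarith

/-- Key estimate, vanishing at either endpoint. -/
theorem my_key {u u' : ℝ → ℝ} {l δ : ℝ} (hl : 0 < l) (hδ : 0 < δ) (hδl : δ ≤ l)
    (hderiv : ∀ x ∈ Set.Icc (0:ℝ) l, HasDerivAt u (u' x) x)
    (hcont : ContinuousOn u' (Set.Icc 0 l)) (hzero : u 0 = 0 ∨ u l = 0) :
    |∫ x in (0:ℝ)..l, u x| ≤
      Real.sqrt (l - δ) * Real.sqrt (∫ x in (0:ℝ)..l, (u x) ^ 2)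
      + δ * Real.sqrt δ * Real.sqrt (∫ x in (0:ℝ)..l, (u' x) ^ 2) := by
  rcases hzero with h0 | h0
  · exact my_key_left hl hδ hδl hderiv hcont h0
  · -- reflect
    set v : ℝ → ℝ := fun x => u (l - x) with hv
    set v' : ℝ → ℝ := fun x => -u' (l - x) with hv'
    have hmem : ∀ x ∈ Set.Icc (0:ℝ) l, l - x ∈ Set.Icc (0:ℝ) l := by
      intro x hx; exact ⟨by linarith [hx.2], by linarith [hx.1]⟩
    have hderiv_v : ∀ x ∈ Set.Icc (0:ℝ) l, HasDerivAt v (v' x) x := by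
      intro x hx
      have h1 : HasDerivAt (fun y : ℝ => l - y) (-1) x := by
        simpa using (hasDerivAt_id' x).const_sub l
      have h2 := (hderiv (l - x) (hmem x hx)).comp x h1
      simpa [hv, hv', mul_comm, Function.comp_def] using h2
    have hcont_v : ContinuousOn v' (Set.Icc 0 l) := by
      apply ContinuousOn.neg
      exact hcont.comp (Continuous.continuousOn (by continuity)) (fun x hx => hmem x hx)
    have hzero_v : v 0 = 0 := by simp [hv, h0]
    have key := my_key_left hl hδ hδl hderiv_v hcont_v hzero_v
    have e1 : (∫ x in (0:ℝ)..l, v x) = ∫ x in (0:ℝ)..l, u x := by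
      have := intervalIntegral.integral_comp_sub_left (a := (0:ℝ)) (b := l) u l
      simpa [hv] using this
    have e2 : (∫ x in (0:ℝ)..l, (v x) ^ 2) = ∫ x in (0:ℝ)..l, (u x) ^ 2 := by
      have := intervalIntegral.integral_comp_sub_left (a := (0:ℝ)) (b := l)
        (fun y => (u y) ^ 2) l
      simpa [hv] using this
    have e3 : (∫ x in (0:ℝ)..l, (v' x) ^ 2) = ∫ x in (0:ℝ)..l, (u' x) ^ 2 := by
      have := intervalIntegral.integral_comp_sub_left (a := (0:ℝ)) (b := l)
        (fun y => (u' y) ^ 2) l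
      simpa [hv'] using this
    rw [e1, e2, e3] at key
    exact key

theorem my_sum_sqrt {ι : Type*} (s : Finset ι) (p q : ι → ℝ)
    (hp : ∀ i ∈ s, 0 ≤ p i) (hq : ∀ i ∈ s, 0 ≤ q i) :
    ∑ i ∈ s, Real.sqrt (p i) * Real.sqrt (q i)
      ≤ Real.sqrt (∑ i ∈ s, p i) * Real.sqrt (∑ i ∈ s, q i) := by
  have h1 : (∑ i ∈ s, Real.sqrt (p i) * Real.sqrt (q i)) ^ 2
      ≤ (∑ i ∈ s, p i) * (∑ i ∈ s, q i) := by
    have := Finset.sum_mul_sq_le_sq_mul_sq s (fun i => Real.sqrt (p i))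
      (fun i => Real.sqrt (q i))
    calc (∑ i ∈ s, Real.sqrt (p i) * Real.sqrt (q i)) ^ 2
        ≤ (∑ i ∈ s, Real.sqrt (p i) ^ 2) * (∑ i ∈ s, Real.sqrt (q i) ^ 2) := this
      _ = (∑ i ∈ s, p i) * (∑ i ∈ s, q i) := by
          rw [Finset.sum_congr rfl (fun i hi => Real.sq_sqrt (hp i hi)),
            Finset.sum_congr rfl (fun i hi => Real.sq_sqrt (hq i hi))]
  have h2 : 0 ≤ ∑ i ∈ s, Real.sqrt (p i) * Real.sqrt (q i) :=
    Finset.sum_nonneg fun i _ => mul_nonneg (Real.sqrt_nonneg _) (Real.sqrt_nonneg _)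
  calc ∑ i ∈ s, Real.sqrt (p i) * Real.sqrt (q i)
      = Real.sqrt ((∑ i ∈ s, Real.sqrt (p i) * Real.sqrt (q i)) ^ 2) :=
        (Real.sqrt_sq h2).symm
    _ ≤ Real.sqrt ((∑ i ∈ s, p i) * (∑ i ∈ s, q i)) := Real.sqrt_le_sqrt h1
    _ = Real.sqrt (∑ i ∈ s, p i) * Real.sqrt (∑ i ∈ s, q i) :=
        Real.sqrt_mul (Finset.sum_nonneg fun i hi => hp i hi) _

theorem my_incident {V E : Type} [Nonempty E] (s t : E → V) (w : V)
    (hconn : ∀ v v' : V, Relation.ReflTransGen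
      (fun a b => ∃ e, (s e = a ∧ t e = b) ∨ (s e = b ∧ t e = a)) v v') :
    ∃ e, s e = w ∨ t e = w := by
  obtain ⟨e⟩ := ‹Nonempty E›
  rcases (hconn w (s e)).cases_head with h | ⟨c, ⟨e', he'⟩, -⟩
  · exact ⟨e, Or.inl h.symm⟩
  · rcases he' with ⟨h1, _⟩ | ⟨_, h2⟩
    · exact ⟨e', Or.inl h1⟩
    · exact ⟨e', Or.inr h2⟩

theorem my_numeric {L R δ : ℝ} (hL : 0 < L) (hR : 0 < R) (hδ : 0 < δ) (hδL : δ ≤ L)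
    (hδR : δ * (L * R) ≤ 1 / 16) :
    (Real.sqrt (L - δ) + δ * Real.sqrt δ * Real.sqrt R) ^ 2 ≤ L - δ / 4 := by
  set a := Real.sqrt (L - δ) with ha
  set b := Real.sqrt δ with hb
  set c := Real.sqrt R with hc
  set sL := Real.sqrt L with hsL
  have ha0 : 0 ≤ a := Real.sqrt_nonneg _
  have hb0 : 0 ≤ b := Real.sqrt_nonneg _
  have hc0 : 0 ≤ c := Real.sqrt_nonneg _
  have hsL0 : 0 ≤ sL := Real.sqrt_nonneg _
  have ha2 : a ^ 2 = L - δ := Real.sq_sqrt (by linarith)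
  have hb2 : b ^ 2 = δ := Real.sq_sqrt hδ.le
  have hc2 : c ^ 2 = R := Real.sq_sqrt hR.le
  have hsL2 : sL ^ 2 = L := Real.sq_sqrt hL.le
  have haL : a ≤ sL := Real.sqrt_le_sqrt (by linarith)
  have hbcs : (b * c * sL) ^ 2 ≤ 1 / 16 := by
    have : (b * c * sL) ^ 2 = δ * (L * R) := by
      rw [mul_pow, mul_pow, hb2, hc2, hsL2]; ring
    linarith [this]
  have hbcs' : b * c * sL ≤ 1 / 4 := by nlinarith [mul_nonneg (mul_nonneg hb0 hc0) hsL0]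
  have hbsL : b ^ 2 ≤ sL ^ 2 := by rw [hb2, hsL2]; exact hδL
  have hsLpos : 0 < sL := Real.sqrt_pos.mpr hL
  have h1 : 2 * a * (δ * b * c) ≤ b ^ 2 / 2 := by
    have : 2 * a * (δ * b * c) = 2 * b ^ 2 * (b * c * a) := by rw [← hb2]; ring
    rw [this]
    have hbca : b * c * a ≤ b * c * sL :=
      mul_le_mul_of_nonneg_left haL (mul_nonneg hb0 hc0)
    nlinarith [sq_nonneg b]
  have h2 : (δ * b * c) ^ 2 ≤ b ^ 2 / 16 := by
    have hkey : (δ * b * c) ^ 2 * sL ^ 2 ≤ b ^ 2 / 16 * sL ^ 2 := by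
      have e1 : (δ * b * c) ^ 2 * sL ^ 2 = b ^ 2 * b ^ 2 * ((b * c * sL) ^ 2) := by
        rw [← hb2]; ring
      rw [e1]
      nlinarith [sq_nonneg (b * c * sL), sq_nonneg b]
    have := mul_le_mul_of_nonneg_right (le_of_eq (rfl : (δ*b*c)^2 * sL^2 = (δ*b*c)^2 * sL^2)) (le_refl (0:ℝ))
    nlinarith [sq_nonneg (b*c), hsLpos]
  nlinarith [ha2, hb2, h1, h2]

set_option maxHeartbeats 1000000 in
/-- Pólya-type inequality: for any compact connected metric graph with nonempty Dirichlet
vertex set, `λ₁(G) · T(G) < |G|`. -/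
theorem stmt17 (V E : Type) [Fintype V] [Fintype E] [DecidableEq V] [Nonempty E]
    (s t : E → V) (ℓ : E → ℝ) (hℓ : ∀ e, 0 < ℓ e)
    (VD : Finset V) (hVD : VD.Nonempty)
    (hconn : ∀ v w : V, Relation.ReflTransGen
      (fun a b => ∃ e, (s e = a ∧ t e = b) ∨ (s e = b ∧ t e = a)) v w) :
    sInf (rayleighSet V E s t ℓ VD) * sSup (polyaSet V E s t ℓ VD) < ∑ e, ℓ e := by
  classical
  set L : ℝ := ∑ e, ℓ e with hLdef
  have hL : 0 < L := Finset.sum_pos (fun e _ => hℓ e) Finset.univ_nonempty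
  -- every Rayleigh quotient is nonnegative
  have hlower : ∀ r ∈ rayleighSet V E s t ℓ VD, (0:ℝ) ≤ r := by
    rintro r ⟨u, u', g, hderiv, hcont, -, -, -, hMpos, rfl⟩
    apply div_nonneg _ hMpos.le
    apply Finset.sum_nonneg
    intro e _
    exact intervalIntegral.integral_nonneg (hℓ e).le (fun x _ => sq_nonneg _)
  -- an explicit element of the Rayleigh set
  obtain ⟨Q₀, hQ₀mem⟩ : ∃ Q₀, Q₀ ∈ rayleighSet V E s t ℓ VD := by
    refine ⟨_, ⟨fun e x => x * (ℓ e - x), fun e x => ℓ e - 2 * x, fun _ => 0,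
      ?_, ?_, ?_, ?_, ?_, ?_, rfl⟩⟩
    · intro e x _
      have h : HasDerivAt (fun y => y * (ℓ e - y)) (1 * (ℓ e - x) + x * (0 - 1)) x :=
        (hasDerivAt_id' x).mul ((hasDerivAt_const x (ℓ e)).sub (hasDerivAt_id' x))
      convert h using 1
      ring
    · intro e
      exact (Continuous.continuousOn (by continuity))
    · intro e; simp
    · intro e; simp
    · intro w _; rfl
    · apply Finset.sum_pos _ Finset.univ_nonempty
      intro e _
      apply intervalIntegral.intervalIntegral_pos_of_pos_on
      · exact Continuous.intervalIntegrable (by continuity) 0 (ℓ e)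
      · intro x hx
        have h1 : 0 < x * (ℓ e - x) := mul_pos hx.1 (by linarith [hx.2])
        positivity
      · exact hℓ e
  have hbdd : BddBelow (rayleighSet V E s t ℓ VD) := ⟨0, fun r hr => hlower r hr⟩
  set lam : ℝ := sInf (rayleighSet V E s t ℓ VD) with hlamdef
  have hlam_le : lam ≤ Q₀ := csInf_le hbdd hQ₀mem
  have hlam0 : 0 ≤ lam := le_csInf ⟨Q₀, hQ₀mem⟩ hlower
  rcases eq_or_lt_of_le hlam0 with hlam | hlam
  · rw [← hlam, zero_mul]; exact hL
  -- main case : lam > 0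
  have hQ₀pos : 0 < Q₀ := lt_of_lt_of_le hlam hlam_le
  set R : ℝ := Q₀ + 1 with hRdef
  have hRpos : 0 < R := by linarith
  have hR1 : 1 < R := by linarith
  obtain ⟨w, hw⟩ := hVD
  obtain ⟨e₀, hinc⟩ := my_incident s t w hconn
  set δ : ℝ := min (ℓ e₀) (1 / (16 * L * R)) with hδdef
  have hδpos : 0 < δ := lt_min (hℓ e₀) (by positivity)
  have hδe₀ : δ ≤ ℓ e₀ := min_le_left _ _
  have hℓ₀L : ℓ e₀ ≤ L := Finset.single_le_sum (fun e _ => (hℓ e).le) (Finset.mem_univ e₀)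
  have hδL : δ ≤ L := hδe₀.trans hℓ₀L
  have hδLR : δ * (L * R) ≤ 1 / 16 := by
    have h := min_le_right (ℓ e₀) (1 / (16 * L * R))
    calc δ * (L * R) ≤ 1 / (16 * L * R) * (L * R) := by
          apply mul_le_mul_of_nonneg_right h (by positivity)
      _ = 1 / 16 := by field_simp
  set ε : ℝ := min (δ / 4) (L / R) with hεdef
  have hεpos : 0 < ε := lt_min (by linarith) (by positivity)
  have hεδ : ε ≤ δ / 4 := min_le_left _ _
  have hεR : ε * R ≤ L := by
    have h := min_le_right (δ / 4) (L / R)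
    calc ε * R ≤ L / R * R := mul_le_mul_of_nonneg_right h hRpos.le
      _ = L := by field_simp
  have hεL : ε < L := by
    have : L / R < L := div_lt_self hL hR1
    exact lt_of_le_of_lt (min_le_right _ _) this
  -- the main bound on every Pólya quotient
  have hub : ∀ r ∈ polyaSet V E s t ℓ VD, r ≤ (L - ε) / lam := by
    rintro r ⟨u, u', g, hderiv, hcont, h0g, hlg, hgz, hDpos, rfl⟩
    set q : E → ℝ := fun e => ∫ x in (0:ℝ)..(ℓ e), (u e x) ^ 2 with hqdef
    set d : E → ℝ := fun e => ∫ x in (0:ℝ)..(ℓ e), (u' e x) ^ 2 with hddef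
    set M : ℝ := ∑ e, q e with hMdef
    set D : ℝ := ∑ e, d e with hDdef
    set N : ℝ := ∑ e, ∫ x in (0:ℝ)..(ℓ e), u e x with hNdef
    have hq0 : ∀ e, 0 ≤ q e := fun e =>
      intervalIntegral.integral_nonneg (hℓ e).le (fun x _ => sq_nonneg _)
    have hd0 : ∀ e, 0 ≤ d e := fun e =>
      intervalIntegral.integral_nonneg (hℓ e).le (fun x _ => sq_nonneg _)
    have hM0 : 0 ≤ M := Finset.sum_nonneg fun e _ => hq0 e
    have hD0 : 0 ≤ D := hDpos.le
    have ucont : ∀ e, ContinuousOn (u e) (Set.Icc 0 (ℓ e)) := fun e x hx =>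
      (hderiv e x hx).continuousAt.continuousWithinAt
    have edgeCS : ∀ e, |∫ x in (0:ℝ)..(ℓ e), u e x| ≤ Real.sqrt (ℓ e) * Real.sqrt (q e) := by
      intro e
      have h := my_interval_CS (hℓ e).le (ucont e)
      calc |∫ x in (0:ℝ)..(ℓ e), u e x|
          = Real.sqrt ((∫ x in (0:ℝ)..(ℓ e), u e x) ^ 2) := (Real.sqrt_sq_eq_abs _).symm
        _ ≤ Real.sqrt (ℓ e * q e) := Real.sqrt_le_sqrt (by simpa using h)
        _ = Real.sqrt (ℓ e) * Real.sqrt (q e) := Real.sqrt_mul (hℓ e).le _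
    have habsN : |N| ≤ Real.sqrt L * Real.sqrt M := by
      calc |N| ≤ ∑ e, |∫ x in (0:ℝ)..(ℓ e), u e x| := Finset.abs_sum_le_sum_abs _ _
        _ ≤ ∑ e, Real.sqrt (ℓ e) * Real.sqrt (q e) := Finset.sum_le_sum fun e _ => edgeCS e
        _ ≤ Real.sqrt L * Real.sqrt M :=
            my_sum_sqrt _ _ _ (fun e _ => (hℓ e).le) (fun e _ => hq0 e)
    have hNLM : N ^ 2 ≤ L * M := by
      have h1 : N ^ 2 = |N| ^ 2 := (sq_abs N).symm
      have h2 : |N| ^ 2 ≤ (Real.sqrt L * Real.sqrt M) ^ 2 :=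
        pow_le_pow_left₀ (abs_nonneg N) habsN 2
      have h3 : (Real.sqrt L * Real.sqrt M) ^ 2 = L * M := by
        rw [mul_pow, Real.sq_sqrt hL.le, Real.sq_sqrt hM0]
      linarith
    have hLε0 : (0:ℝ) ≤ L - ε := by linarith
    rcases eq_or_lt_of_le hM0 with hM | hM
    · -- M = 0 : the quotient vanishes
      have hN0 : N ^ 2 = 0 := le_antisymm (by nlinarith) (sq_nonneg N)
      rw [hN0, zero_div]
      exact div_nonneg hLε0 hlam0
    -- M > 0
    have hlamDM : lam * M ≤ D := by
      have hmem : D / M ∈ rayleighSet V E s t ℓ VD :=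
        ⟨u, u', g, hderiv, hcont, h0g, hlg, hgz, hM, rfl⟩
      have h := csInf_le hbdd hmem
      calc lam * M ≤ D / M * M := mul_le_mul_of_nonneg_right h hM.le
        _ = D := by field_simp
    rcases le_or_gt D (R * M) with hρ | hρ
    · -- small Dirichlet-energy/mass ratio : use the refined bound
      have uzero : u e₀ 0 = 0 ∨ u e₀ (ℓ e₀) = 0 := by
        rcases hinc with h | h
        · left; rw [h0g e₀, h]; exact hgz w hw
        · right; rw [hlg e₀, h]; exact hgz w hw
      set p : E → ℝ := fun e => if e = e₀ then ℓ e₀ - δ else ℓ e with hpdef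
      have hp0 : ∀ e, 0 ≤ p e := by
        intro e
        by_cases he : e = e₀
        · simp only [hpdef, if_pos he]; linarith
        · simp only [hpdef, if_neg he]; exact (hℓ e).le
      have hpsum : ∑ e, p e = L - δ := by
        have hc : ∀ e ∈ Finset.univ, p e = ℓ e - (if e = e₀ then δ else 0) := by
          intro e _
          by_cases he : e = e₀
          · subst he; simp [hpdef]
          · simp [hpdef, he]
        rw [Finset.sum_congr rfl hc, Finset.sum_sub_distrib,
          Finset.sum_ite_eq' Finset.univ e₀]
        simp [hLdef]
      have hde₀D : d e₀ ≤ D := Finset.single_le_sum (fun e _ => hd0 e) (Finset.mem_univ e₀)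
      have hper : ∀ e, |∫ x in (0:ℝ)..(ℓ e), u e x| ≤
          Real.sqrt (p e) * Real.sqrt (q e)
            + (if e = e₀ then δ * Real.sqrt δ * Real.sqrt D else 0) := by
        intro e
        by_cases he : e = e₀
        · rw [he]
          simp only [if_pos rfl]
          have hkey := my_key (hℓ e₀) hδpos hδe₀ (hderiv e₀) (hcont e₀) uzero
          have hpe : p e₀ = ℓ e₀ - δ := if_pos rfl
          rw [hpe]
          have hsd : Real.sqrt (d e₀) ≤ Real.sqrt D := Real.sqrt_le_sqrt hde₀D
          have h2 : δ * Real.sqrt δ * Real.sqrt (d e₀) ≤ δ * Real.sqrt δ * Real.sqrt D :=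
            mul_le_mul_of_nonneg_left hsd (by positivity)
          calc |∫ x in (0:ℝ)..(ℓ e₀), u e₀ x|
              ≤ Real.sqrt (ℓ e₀ - δ) * Real.sqrt (q e₀)
                + δ * Real.sqrt δ * Real.sqrt (d e₀) := hkey
            _ ≤ Real.sqrt (ℓ e₀ - δ) * Real.sqrt (q e₀)
                + δ * Real.sqrt δ * Real.sqrt D := by linarith
        · simp only [if_neg he, add_zero, hpdef]
          simpa [he] using edgeCS e
      have habs : |N| ≤ Real.sqrt (L - δ) * Real.sqrt M + δ * Real.sqrt δ * Real.sqrt D := by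
        calc |N| ≤ ∑ e, |∫ x in (0:ℝ)..(ℓ e), u e x| := Finset.abs_sum_le_sum_abs _ _
          _ ≤ ∑ e, (Real.sqrt (p e) * Real.sqrt (q e)
              + (if e = e₀ then δ * Real.sqrt δ * Real.sqrt D else 0)) :=
            Finset.sum_le_sum fun e _ => hper e
          _ = (∑ e, Real.sqrt (p e) * Real.sqrt (q e)) + δ * Real.sqrt δ * Real.sqrt D := by
            rw [Finset.sum_add_distrib, Finset.sum_ite_eq' Finset.univ e₀]
            simp
          _ ≤ Real.sqrt (L - δ) * Real.sqrt M + δ * Real.sqrt δ * Real.sqrt D := by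
            have h := my_sum_sqrt Finset.univ p q (fun e _ => hp0 e) (fun e _ => hq0 e)
            rw [hpsum] at h
            linarith
      have hsqD : Real.sqrt D ≤ Real.sqrt R * Real.sqrt M := by
        calc Real.sqrt D ≤ Real.sqrt (R * M) := Real.sqrt_le_sqrt hρ
          _ = Real.sqrt R * Real.sqrt M := Real.sqrt_mul hRpos.le _
      have habs2 : |N| ≤ (Real.sqrt (L - δ) + δ * Real.sqrt δ * Real.sqrt R) * Real.sqrt M := by
        have h1 : δ * Real.sqrt δ * Real.sqrt D ≤ δ * Real.sqrt δ * (Real.sqrt R * Real.sqrt M) :=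
          mul_le_mul_of_nonneg_left hsqD (by positivity)
        calc |N| ≤ Real.sqrt (L - δ) * Real.sqrt M + δ * Real.sqrt δ * Real.sqrt D := habs
          _ ≤ Real.sqrt (L - δ) * Real.sqrt M
              + δ * Real.sqrt δ * (Real.sqrt R * Real.sqrt M) := by linarith
          _ = (Real.sqrt (L - δ) + δ * Real.sqrt δ * Real.sqrt R) * Real.sqrt M := by ring
      have hN4 : N ^ 2 ≤ (L - δ / 4) * M := by
        have h1 : N ^ 2 ≤ ((Real.sqrt (L - δ) + δ * Real.sqrt δ * Real.sqrt R) * Real.sqrt M) ^ 2 := by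
          rw [← sq_abs N]
          exact pow_le_pow_left₀ (abs_nonneg N) habs2 2
        have h2 : ((Real.sqrt (L - δ) + δ * Real.sqrt δ * Real.sqrt R) * Real.sqrt M) ^ 2
            = (Real.sqrt (L - δ) + δ * Real.sqrt δ * Real.sqrt R) ^ 2 * M := by
          rw [mul_pow, Real.sq_sqrt hM0]
        have h3 := my_numeric hL hRpos hδpos hδL hδLR
        calc N ^ 2 ≤ (Real.sqrt (L - δ) + δ * Real.sqrt δ * Real.sqrt R) ^ 2 * M := by
              rw [← h2]; exact h1
          _ ≤ (L - δ / 4) * M := mul_le_mul_of_nonneg_right h3 hM.le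
      rw [div_le_div_iff₀ hDpos hlam]
      calc N ^ 2 * lam ≤ (L - δ / 4) * M * lam :=
            mul_le_mul_of_nonneg_right hN4 hlam0
        _ = (L - δ / 4) * (lam * M) := by ring
        _ ≤ (L - δ / 4) * D := mul_le_mul_of_nonneg_left hlamDM (by linarith)
        _ ≤ (L - ε) * D := mul_le_mul_of_nonneg_right (by linarith) hD0
    · -- large ratio : crude bound suffices
      rw [div_le_div_iff₀ hDpos hlam]
      have h1 : N ^ 2 * lam ≤ L * M * lam := mul_le_mul_of_nonneg_right hNLM hlam0
      have h2 : L * M * lam ≤ L * M * Q₀ :=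
        mul_le_mul_of_nonneg_left hlam_le (by positivity)
      have h3 : (L - ε) * (R * M) ≤ (L - ε) * D :=
        mul_le_mul_of_nonneg_left hρ.le hLε0
      have hQR : Q₀ = R - 1 := by rw [hRdef]; ring
      have h5 : L * (R - 1) ≤ (L - ε) * R := by nlinarith [hεR]
      have h4 : L * M * Q₀ ≤ (L - ε) * (R * M) := by
        calc L * M * Q₀ = L * (R - 1) * M := by rw [hQR]; ring
          _ ≤ (L - ε) * R * M := mul_le_mul_of_nonneg_right h5 hM.le
          _ = (L - ε) * (R * M) := by ring
      linarith
  -- conclude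
  have hsup : sSup (polyaSet V E s t ℓ VD) ≤ (L - ε) / lam :=
    Real.sSup_le hub (div_nonneg (by linarith) hlam0)
  calc lam * sSup (polyaSet V E s t ℓ VD) ≤ lam * ((L - ε) / lam) :=
        mul_le_mul_of_nonneg_left hsup hlam0
    _ = L - ε := by field_simp
    _ < L := by linarith
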